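/- Let K be a field of characteristic different from 2, and let (y₀, y₁, y₂, y₃, x₀, x₁, x₂, x₃) ∈ K⁸ be a nonzero vector satisfying y₀² = 2(x₀x₃ + x₁x₂), y₁² = 2(x₀x₃ − x₁x₂), y₂² = 2(x₀x₂ − x₁x₃), y₃² = 2(x₀x₂ + x₁x₃). Then the 4 × 8 Jacobian matrix of the four polynomials Y₀² − 2(X₀X₃ + X₁X₂), Y₁² − 2(X₀X₃ − X₁X₂), Y₂² − 2(X₀X₂ − X₁X₃), Y₃² − 2(X₀X₂ + X₁X₃) evaluated at this vector has rank strictly less than 4 if and only if y₀ = y₁ = y₂ = y₃ = 0 and (x₀ = x₁ = 0 or x₂ = x₃ = 0). In other words, the singular locus of the Satake model Z consists exactly of the two lines L_{0,1} : Y₀ = Y₁ = Y₂ = Y₃ = X₀ = X₁ = 0 and L_{2,3} : Y₀ = Y₁ = Y₂ = Y₃ = X₂ = X₃ = 0. -/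

import Mathlib

private lemma rank_lt_four_iff {K : Type*} [Field K] (M : Matrix (Fin 4) (Fin 8) K) :
    M.rank < 4 ↔ ¬ LinearIndependent K M := by
  constructor
  · intro h hLI
    have := hLI.rank_matrix
    simp [Fintype.card_fin] at this
    omega
  · intro h
    have hle : M.rank ≤ 4 := by simpa using M.rank_le_card_height
    rcases lt_or_eq_of_le hle with h' | h'
    · exact h'
    · exfalso
      apply h
      refine (linearIndependent_iff_card_eq_finrank_span).mpr ?_
      rw [Matrix.rank_eq_finrank_span_row] at h'
      rw [show Set.range M.row = Set.range M from rfl] at h'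
      simp [Set.finrank, Fintype.card_fin]
      omega

private lemma indep_aux {K : Type*} [Field K] (two : (2:K) ≠ 0)
    (y₀ y₁ y₂ y₃ x₀ x₁ x₂ x₃ c₀ c₁ c₂ c₃ : K)
    (h0 : y₀ ^ 2 = 2 * (x₀ * x₃ + x₁ * x₂))
    (h1 : y₁ ^ 2 = 2 * (x₀ * x₃ - x₁ * x₂))
    (h2 : y₂ ^ 2 = 2 * (x₀ * x₂ - x₁ * x₃))
    (h3 : y₃ ^ 2 = 2 * (x₀ * x₂ + x₁ * x₃))
    (hy : y₀ ≠ 0 ∨ y₁ ≠ 0 ∨ y₂ ≠ 0 ∨ y₃ ≠ 0)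
    (E0 : y₀ * c₀ = 0) (E1 : y₁ * c₁ = 0) (E2 : y₂ * c₂ = 0) (E3 : y₃ * c₃ = 0)
    (E4 : x₃*c₀ + x₃*c₁ + x₂*c₂ + x₂*c₃ = 0)
    (E5 : x₂*c₀ - x₂*c₁ - x₃*c₂ + x₃*c₃ = 0)
    (E6 : x₁*c₀ - x₁*c₁ + x₀*c₂ + x₀*c₃ = 0)
    (E7 : x₀*c₀ + x₀*c₁ - x₁*c₂ + x₁*c₃ = 0) :
    c₀ = 0 ∧ c₁ = 0 ∧ c₂ = 0 ∧ c₃ = 0 := by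
  rcases hy with hy|hy|hy|hy
  · -- y₀ ≠ 0
    have hs : x₀*x₃ + x₁*x₂ ≠ 0 := fun hs0 => (pow_ne_zero 2 hy) (by rw [h0, hs0, mul_zero])
    have hc0 : c₀ = 0 := (mul_eq_zero.mp E0).resolve_left hy
    have hc1 : c₁ = 0 := by
      have h : (x₀*x₃ + x₁*x₂) * c₁ = 0 := by
        linear_combination x₀*E4 - x₂*E6 - (x₀*x₃ - x₁*x₂)*hc0
      exact (mul_eq_zero.mp h).resolve_left hs
    have hu : c₂ + c₃ = 0 := by
      have h : (x₀*x₃ + x₁*x₂) * (c₂ + c₃) = 0 := by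
        linear_combination x₁*E4 + x₃*E6 - 2*x₁*x₃*hc0
      exact (mul_eq_zero.mp h).resolve_left hs
    have hv : c₂ - c₃ = 0 := by
      have h : (x₀*x₃ + x₁*x₂) * (c₂ - c₃) = 0 := by
        linear_combination -x₀*E5 - x₂*E7 + 2*x₀*x₂*hc0
      exact (mul_eq_zero.mp h).resolve_left hs
    have hc2 : c₂ = 0 := by
      have h : (2:K) * c₂ = 0 := by linear_combination hu + hv
      exact (mul_eq_zero.mp h).resolve_left two
    exact ⟨hc0, hc1, hc2, by linear_combination hu - hc2⟩
  · -- y₁ ≠ 0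
    have hs : x₀*x₃ - x₁*x₂ ≠ 0 := fun hs0 => (pow_ne_zero 2 hy) (by rw [h1, hs0, mul_zero])
    have hc1 : c₁ = 0 := (mul_eq_zero.mp E1).resolve_left hy
    have hc0 : c₀ = 0 := by
      have h : (x₀*x₃ - x₁*x₂) * c₀ = 0 := by
        linear_combination x₀*E4 - x₂*E6 - (x₀*x₃ + x₁*x₂)*hc1
      exact (mul_eq_zero.mp h).resolve_left hs
    have hu : c₂ + c₃ = 0 := by
      have h : (x₀*x₃ - x₁*x₂) * (c₂ + c₃) = 0 := by
        linear_combination x₃*E6 - x₁*E4 + 2*x₁*x₃*hc1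
      exact (mul_eq_zero.mp h).resolve_left hs
    have hv : c₂ - c₃ = 0 := by
      have h : (x₀*x₃ - x₁*x₂) * (c₂ - c₃) = 0 := by
        linear_combination -x₀*E5 + x₂*E7 - 2*x₀*x₂*hc1
      exact (mul_eq_zero.mp h).resolve_left hs
    have hc2 : c₂ = 0 := by
      have h : (2:K) * c₂ = 0 := by linear_combination hu + hv
      exact (mul_eq_zero.mp h).resolve_left two
    exact ⟨hc0, hc1, hc2, by linear_combination hu - hc2⟩
  · -- y₂ ≠ 0
    have hs : x₀*x₂ - x₁*x₃ ≠ 0 := fun hs0 => (pow_ne_zero 2 hy) (by rw [h2, hs0, mul_zero])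
    have hc2 : c₂ = 0 := (mul_eq_zero.mp E2).resolve_left hy
    have hc3 : c₃ = 0 := by
      have h : (x₀*x₂ - x₁*x₃) * c₃ = 0 := by
        linear_combination x₀*E4 - x₃*E7 - (x₀*x₂ + x₁*x₃)*hc2
      exact (mul_eq_zero.mp h).resolve_left hs
    have ha : c₀ + c₁ = 0 := by
      have h : (x₀*x₂ - x₁*x₃) * (c₀ + c₁) = 0 := by
        linear_combination x₂*E7 - x₁*E4 + 2*x₁*x₂*hc2
      exact (mul_eq_zero.mp h).resolve_left hs
    have hb : c₀ - c₁ = 0 := by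
      have h : (x₀*x₂ - x₁*x₃) * (c₀ - c₁) = 0 := by
        linear_combination x₀*E5 - x₃*E6 + 2*x₀*x₃*hc2
      exact (mul_eq_zero.mp h).resolve_left hs
    have hc0 : c₀ = 0 := by
      have h : (2:K) * c₀ = 0 := by linear_combination ha + hb
      exact (mul_eq_zero.mp h).resolve_left two
    exact ⟨hc0, by linear_combination ha - hc0, hc2, hc3⟩
  · -- y₃ ≠ 0
    have hs : x₀*x₂ + x₁*x₃ ≠ 0 := fun hs0 => (pow_ne_zero 2 hy) (by rw [h3, hs0, mul_zero])
    have hc3 : c₃ = 0 := (mul_eq_zero.mp E3).resolve_left hy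
    have hc2 : c₂ = 0 := by
      have h : (x₀*x₂ + x₁*x₃) * c₂ = 0 := by
        linear_combination x₀*E4 - x₃*E7 - (x₀*x₂ - x₁*x₃)*hc3
      exact (mul_eq_zero.mp h).resolve_left hs
    have ha : c₀ + c₁ = 0 := by
      have h : (x₀*x₂ + x₁*x₃) * (c₀ + c₁) = 0 := by
        linear_combination x₂*E7 + x₁*E4 - 2*x₁*x₂*hc3
      exact (mul_eq_zero.mp h).resolve_left hs
    have hb : c₀ - c₁ = 0 := by
      have h : (x₀*x₂ + x₁*x₃) * (c₀ - c₁) = 0 := by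
        linear_combination x₀*E5 + x₃*E6 - 2*x₀*x₃*hc3
      exact (mul_eq_zero.mp h).resolve_left hs
    have hc0 : c₀ = 0 := by
      have h : (2:K) * c₀ = 0 := by linear_combination ha + hb
      exact (mul_eq_zero.mp h).resolve_left two
    exact ⟨hc0, by linear_combination ha - hc0, hc2, hc3⟩

theorem satake_singular_locus (K : Type*) [Field K] (hK : ringChar K ≠ 2)
    (y₀ y₁ y₂ y₃ x₀ x₁ x₂ x₃ : K)
    (hne : ![y₀, y₁, y₂, y₃, x₀, x₁, x₂, x₃] ≠ 0)
    (h0 : y₀ ^ 2 = 2 * (x₀ * x₃ + x₁ * x₂))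
    (h1 : y₁ ^ 2 = 2 * (x₀ * x₃ - x₁ * x₂))
    (h2 : y₂ ^ 2 = 2 * (x₀ * x₂ - x₁ * x₃))
    (h3 : y₃ ^ 2 = 2 * (x₀ * x₂ + x₁ * x₃)) :
    (!![2 * y₀, 0, 0, 0, -2 * x₃, -2 * x₂, -2 * x₁, -2 * x₀;
        0, 2 * y₁, 0, 0, -2 * x₃, 2 * x₂, 2 * x₁, -2 * x₀;
        0, 0, 2 * y₂, 0, -2 * x₂, 2 * x₃, -2 * x₀, 2 * x₁;
        0, 0, 0, 2 * y₃, -2 * x₂, -2 * x₃, -2 * x₀, -2 * x₁] : Matrix (Fin 4) (Fin 8) K).rank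
        < 4 ↔
      (y₀ = 0 ∧ y₁ = 0 ∧ y₂ = 0 ∧ y₃ = 0 ∧
        ((x₀ = 0 ∧ x₁ = 0) ∨ (x₂ = 0 ∧ x₃ = 0))) := by
  have two : (2:K) ≠ 0 := Ring.two_ne_zero hK
  have i5 : (5 : Fin 8) = Fin.succ 4 := rfl
  have i6 : (6 : Fin 8) = Fin.succ (Fin.succ 4) := rfl
  have i7 : (7 : Fin 8) = Fin.succ (Fin.succ (Fin.succ 4)) := rfl
  rw [rank_lt_four_iff]
  constructor
  · intro hNLI
    have hy : y₀ = 0 ∧ y₁ = 0 ∧ y₂ = 0 ∧ y₃ = 0 := by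
      by_contra hcon
      have hy' : y₀ ≠ 0 ∨ y₁ ≠ 0 ∨ y₂ ≠ 0 ∨ y₃ ≠ 0 := by tauto
      apply hNLI
      refine Fintype.linearIndependent_iff.mpr ?_
      intro g hg
      have e0 := congrFun hg 0
      have e1 := congrFun hg 1
      have e2 := congrFun hg 2
      have e3 := congrFun hg 3
      have e4 := congrFun hg 4
      have e5 := congrFun hg 5
      have e6 := congrFun hg 6
      have e7 := congrFun hg 7
      rw [i5] at e5
      rw [i6] at e6
      rw [i7] at e7
      simp only [Fin.sum_univ_four, Finset.sum_apply, Pi.smul_apply, smul_eq_mul,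
        Pi.zero_apply, Matrix.cons_val', Matrix.cons_val_zero, Matrix.cons_val_one,
        Matrix.cons_val_two, Matrix.cons_val_three, Matrix.cons_val_four,
        Matrix.cons_val_succ, Matrix.head_cons, Matrix.head_fin_const, Matrix.of_apply,
        Matrix.empty_val', Matrix.cons_val_fin_one, Matrix.vecHead, Matrix.vecTail,
        Function.comp_apply, mul_zero, add_zero, zero_add, mul_one, mul_neg] at e0 e1 e2 e3 e4 e5 e6 e7
      have E0 : y₀ * g 0 = 0 := by
        have h : (2:K) * (y₀ * g 0) = 0 := by linear_combination e0
        exact (mul_eq_zero.mp h).resolve_left two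
      have E1 : y₁ * g 1 = 0 := by
        have h : (2:K) * (y₁ * g 1) = 0 := by linear_combination e1
        exact (mul_eq_zero.mp h).resolve_left two
      have E2 : y₂ * g 2 = 0 := by
        have h : (2:K) * (y₂ * g 2) = 0 := by linear_combination e2
        exact (mul_eq_zero.mp h).resolve_left two
      have E3 : y₃ * g 3 = 0 := by
        have h : (2:K) * (y₃ * g 3) = 0 := by linear_combination e3
        exact (mul_eq_zero.mp h).resolve_left two
      have E4 : x₃*(g 0) + x₃*(g 1) + x₂*(g 2) + x₂*(g 3) = 0 := by
        have h : (2:K) * (x₃*(g 0) + x₃*(g 1) + x₂*(g 2) + x₂*(g 3)) = 0 := by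
          linear_combination -e4
        exact (mul_eq_zero.mp h).resolve_left two
      have E5 : x₂*(g 0) - x₂*(g 1) - x₃*(g 2) + x₃*(g 3) = 0 := by
        have h : (2:K) * (x₂*(g 0) - x₂*(g 1) - x₃*(g 2) + x₃*(g 3)) = 0 := by
          linear_combination -e5
        exact (mul_eq_zero.mp h).resolve_left two
      have E6 : x₁*(g 0) - x₁*(g 1) + x₀*(g 2) + x₀*(g 3) = 0 := by
        have h : (2:K) * (x₁*(g 0) - x₁*(g 1) + x₀*(g 2) + x₀*(g 3)) = 0 := by
          linear_combination -e6
        exact (mul_eq_zero.mp h).resolve_left two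
      have E7 : x₀*(g 0) + x₀*(g 1) - x₁*(g 2) + x₁*(g 3) = 0 := by
        have h : (2:K) * (x₀*(g 0) + x₀*(g 1) - x₁*(g 2) + x₁*(g 3)) = 0 := by
          linear_combination -e7
        exact (mul_eq_zero.mp h).resolve_left two
      obtain ⟨hc0, hc1, hc2, hc3⟩ := indep_aux two y₀ y₁ y₂ y₃ x₀ x₁ x₂ x₃
        (g 0) (g 1) (g 2) (g 3) h0 h1 h2 h3 hy' E0 E1 E2 E3 E4 E5 E6 E7
      intro i
      fin_cases i
      · exact hc0
      · exact hc1
      · exact hc2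
      · exact hc3
    obtain ⟨hy0, hy1, hy2, hy3⟩ := hy
    refine ⟨hy0, hy1, hy2, hy3, ?_⟩
    have four : (4:K) ≠ 0 := by
      have : (4:K) = 2*2 := by norm_num
      rw [this]; exact mul_ne_zero two two
    have p03 : x₀ * x₃ = 0 := by
      have h : (4:K) * (x₀*x₃) = 0 := by linear_combination -h0 - h1 + y₀*hy0 + y₁*hy1
      exact (mul_eq_zero.mp h).resolve_left four
    have p12 : x₁ * x₂ = 0 := by
      have h : (4:K) * (x₁*x₂) = 0 := by linear_combination h1 - h0 + y₀*hy0 - y₁*hy1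
      exact (mul_eq_zero.mp h).resolve_left four
    have p02 : x₀ * x₂ = 0 := by
      have h : (4:K) * (x₀*x₂) = 0 := by linear_combination -h2 - h3 + y₂*hy2 + y₃*hy3
      exact (mul_eq_zero.mp h).resolve_left four
    have p13 : x₁ * x₃ = 0 := by
      have h : (4:K) * (x₁*x₃) = 0 := by linear_combination h2 - h3 - y₂*hy2 + y₃*hy3
      exact (mul_eq_zero.mp h).resolve_left four
    by_cases hx0 : x₀ = 0
    · by_cases hx1 : x₁ = 0
      · exact Or.inl ⟨hx0, hx1⟩
      · exact Or.inr ⟨(mul_eq_zero.mp p12).resolve_left hx1, (mul_eq_zero.mp p13).resolve_left hx1⟩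
    · exact Or.inr ⟨(mul_eq_zero.mp p02).resolve_left hx0, (mul_eq_zero.mp p03).resolve_left hx0⟩
  · rintro ⟨hy0, hy1, hy2, hy3, hx⟩ hLI
    replace hLI := Fintype.linearIndependent_iff.mp hLI
    rcases hx with ⟨hx0, hx1⟩ | ⟨hx2, hx3⟩
    · have hsum : ∑ i, (![x₂, x₂, -x₃, -x₃] : Fin 4 → K) i •
          (!![2 * y₀, 0, 0, 0, -2 * x₃, -2 * x₂, -2 * x₁, -2 * x₀;
              0, 2 * y₁, 0, 0, -2 * x₃, 2 * x₂, 2 * x₁, -2 * x₀;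
              0, 0, 2 * y₂, 0, -2 * x₂, 2 * x₃, -2 * x₀, 2 * x₁;
              0, 0, 0, 2 * y₃, -2 * x₂, -2 * x₃, -2 * x₀, -2 * x₁] :
            Matrix (Fin 4) (Fin 8) K) i = 0 := by
        subst hy0 hy1 hy2 hy3 hx0 hx1
        apply funext
        simp only [Fin.forall_fin_succ, IsEmpty.forall_iff, Finset.sum_apply, Pi.smul_apply,
          smul_eq_mul, Pi.zero_apply, Fin.sum_univ_four, Matrix.of_apply, Matrix.cons_val_zero,
          Matrix.cons_val_one, Matrix.cons_val_two, Matrix.cons_val_three, Matrix.cons_val_succ,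
          Matrix.head_cons, Matrix.vecHead, Matrix.vecTail, Function.comp_apply, and_true]
        ring_nf
        simp
      have h2 := hLI _ hsum 0
      have h3 := hLI _ hsum 2
      simp at h2 h3
      apply hne
      rw [hy0, hy1, hy2, hy3, hx0, hx1, h2, h3]
      simp
    · have hsum : ∑ i, (![x₀, -x₀, -x₁, -x₁] : Fin 4 → K) i •
          (!![2 * y₀, 0, 0, 0, -2 * x₃, -2 * x₂, -2 * x₁, -2 * x₀;
              0, 2 * y₁, 0, 0, -2 * x₃, 2 * x₂, 2 * x₁, -2 * x₀;
              0, 0, 2 * y₂, 0, -2 * x₂, 2 * x₃, -2 * x₀, 2 * x₁;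
              0, 0, 0, 2 * y₃, -2 * x₂, -2 * x₃, -2 * x₀, -2 * x₁] :
            Matrix (Fin 4) (Fin 8) K) i = 0 := by
        subst hy0 hy1 hy2 hy3 hx2 hx3
        apply funext
        simp only [Fin.forall_fin_succ, IsEmpty.forall_iff, Finset.sum_apply, Pi.smul_apply,
          smul_eq_mul, Pi.zero_apply, Fin.sum_univ_four, Matrix.of_apply, Matrix.cons_val_zero,
          Matrix.cons_val_one, Matrix.cons_val_two, Matrix.cons_val_three, Matrix.cons_val_succ,
          Matrix.head_cons, Matrix.vecHead, Matrix.vecTail, Function.comp_apply, and_true]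
        ring_nf
        simp
      have h2 := hLI _ hsum 0
      have h3 := hLI _ hsum 2
      simp at h2 h3
      apply hne
      rw [hy0, hy1, hy2, hy3, hx2, hx3, h2, h3]
      simp
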